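/- Uniqueness of the extended equilibrium of the 'Generals and the weather' game: the 2-player game with uncertainty with action sets 𝒜_1 = 𝒜_2 = {Up, Down}, parameter set Θ = {Calm, Storm}, and utilities U_1(·,·;Calm) = [[1,0],[0,1]], U_1(·,·;Storm) = [[1,0],[1,1]], U_2(·,·;Calm) = [[0,1],[1,0]], U_2(·,·;Storm) = [[0,1],[0,0]] has exactly one extended equilibrium, namely σ*_1 = (1−1/√2, 1/√2), σ*_2 = (2−√2, √2−1), π*_1 = (1/√2, 1−1/√2), π*_2 = (√2−1, 2−√2). -/
import Mathlib


open Finset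

noncomputable section

/-- A probability distribution on a finite type. -/
def IsDist {α : Type*} [Fintype α] (p : α → ℝ) : Prop :=
  (∀ x, 0 ≤ p x) ∧ ∑ x, p x = 1

variable {N : ℕ} {A : Fin N → Type*} [∀ j, Fintype (A j)] [∀ j, Nonempty (A j)]
  {Θ : Type*} [Fintype Θ] [Nonempty Θ]

/-- `Π(a|σ) = ∏ⱼ σⱼ(aⱼ)`. -/
def piProb (σ : ∀ j : Fin N, A j → ℝ) (a : ∀ j : Fin N, A j) : ℝ := ∏ j, σ j (a j)

/-- Effective utility matrix `EUᵢ(aᵢ;θ|σ)`. -/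
def EUmat (U : ∀ i : Fin N, (∀ j : Fin N, A j) → Θ → ℝ) (σ : ∀ j : Fin N, A j → ℝ)
    (i : Fin N) (ai : A i) (θ : Θ) : ℝ :=
  ∑ b : ∀ j : Fin N, A j, U i (Function.update b i ai) θ * piProb σ b

/-- Effective regret matrix `ERᵢ(aᵢ;θ|σ)`. -/
def ERmat (U : ∀ i : Fin N, (∀ j : Fin N, A j) → Θ → ℝ) (σ : ∀ j : Fin N, A j → ℝ)
    (i : Fin N) (ai : A i) (θ : Θ) : ℝ :=
  (Finset.univ.sup' Finset.univ_nonempty fun ci : A i => EUmat U σ i ci θ) - EUmat U σ i ai θ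

/-- Expected utility of action `aᵢ`: `EUᵢ(aᵢ|σ;π)`. -/
def EUact (U : ∀ i : Fin N, (∀ j : Fin N, A j) → Θ → ℝ) (σ : ∀ j : Fin N, A j → ℝ) (π : Fin N → Θ → ℝ)
    (i : Fin N) (ai : A i) : ℝ :=
  ∑ θ, EUmat U σ i ai θ * π i θ

/-- Expected utility `EUᵢ(σ;π)`. -/
def EUtot (U : ∀ i : Fin N, (∀ j : Fin N, A j) → Θ → ℝ) (σ : ∀ j : Fin N, A j → ℝ) (π : Fin N → Θ → ℝ)
    (i : Fin N) : ℝ :=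
  ∑ ai, EUact U σ π i ai * σ i ai

/-- Expected regret at parameter `θ`: `ERᵢ(θ|σ;π)`. -/
def ERparam (U : ∀ i : Fin N, (∀ j : Fin N, A j) → Θ → ℝ) (σ : ∀ j : Fin N, A j → ℝ)
    (i : Fin N) (θ : Θ) : ℝ :=
  ∑ ai, ERmat U σ i ai θ * σ i ai

/-- Expected regret `ERᵢ(σ;π)`. -/
def ERtot (U : ∀ i : Fin N, (∀ j : Fin N, A j) → Θ → ℝ) (σ : ∀ j : Fin N, A j → ℝ) (π : Fin N → Θ → ℝ)
    (i : Fin N) : ℝ :=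
  ∑ θ, ERparam U σ i θ * π i θ

/-- Extended equilibrium conditions. -/
def ExtendedEquilibrium (U : ∀ i : Fin N, (∀ j : Fin N, A j) → Θ → ℝ)
    (σ : ∀ j : Fin N, A j → ℝ) (π : Fin N → Θ → ℝ) : Prop :=
  (∀ i, ∀ ai : A i, EUtot U σ π i ≥ EUact U σ π i ai) ∧
  (∀ i, ∀ θ : Θ, ERtot U σ π i ≥ ERparam U σ i θ)

/-- φ_{i,aᵢ}(σ;π). -/
def phi (U : ∀ i : Fin N, (∀ j : Fin N, A j) → Θ → ℝ) (σ : ∀ j : Fin N, A j → ℝ) (π : Fin N → Θ → ℝ)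
    (i : Fin N) (ai : A i) : ℝ :=
  max 0 (EUact U σ π i ai - EUtot U σ π i)

/-- ψ_{i,θ}(σ;π). -/
def psi (U : ∀ i : Fin N, (∀ j : Fin N, A j) → Θ → ℝ) (σ : ∀ j : Fin N, A j → ℝ) (π : Fin N → Θ → ℝ)
    (i : Fin N) (θ : Θ) : ℝ :=
  max 0 (ERparam U σ i θ - ERtot U σ π i)

/-- Real-strategy part of the auxiliary map `Υ`. -/
def nextStrat (U : ∀ i : Fin N, (∀ j : Fin N, A j) → Θ → ℝ) (σ : ∀ j : Fin N, A j → ℝ) (π : Fin N → Θ → ℝ)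
    (i : Fin N) (ai : A i) : ℝ :=
  (σ i ai + phi U σ π i ai) / (1 + ∑ bi, phi U σ π i bi)

/-- Prior part of the auxiliary map `Υ`. -/
def nextPrior (U : ∀ i : Fin N, (∀ j : Fin N, A j) → Θ → ℝ) (σ : ∀ j : Fin N, A j → ℝ) (π : Fin N → Θ → ℝ)
    (i : Fin N) (θ : Θ) : ℝ :=
  (π i θ + psi U σ π i θ) / (1 + ∑ χ, psi U σ π i χ)

/-- The auxiliary map `Υ`. -/
def Upsilon (U : ∀ i : Fin N, (∀ j : Fin N, A j) → Θ → ℝ)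
    (ρ : (∀ i, A i → ℝ) × (Fin N → Θ → ℝ)) : (∀ i, A i → ℝ) × (Fin N → Θ → ℝ) :=
  (fun i => nextStrat U ρ.1 ρ.2 i, fun i => nextPrior U ρ.1 ρ.2 i)

/-- The utilities of the "Generals and the weather" game. -/
def GWU : ∀ _ : Fin 2, (∀ _ : Fin 2, Fin 2) → Fin 2 → ℝ := fun i a θ =>
  if i = 0 then
    (if θ = 0 then !![(1:ℝ), 0; 0, 1] else !![(1:ℝ), 0; 1, 1]) (a 0) (a 1)
  else
    (if θ = 0 then !![(0:ℝ), 1; 1, 0] else !![(0:ℝ), 1; 0, 0]) (a 0) (a 1)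

/-- The equilibrium mixed strategies `σ*` of the "Generals and the weather" game. -/
def GWσ : ∀ _ : Fin 2, Fin 2 → ℝ :=
  ![![1 - 1 / Real.sqrt 2, 1 / Real.sqrt 2], ![2 - Real.sqrt 2, Real.sqrt 2 - 1]]

/-- The equilibrium subjective priors `π*` of the "Generals and the weather" game. -/
def GWπ : Fin 2 → Fin 2 → ℝ :=
  ![![1 / Real.sqrt 2, 1 - 1 / Real.sqrt 2], ![Real.sqrt 2 - 1, 2 - Real.sqrt 2]]


lemma sum_pi_fin_two (f : (∀ _ : Fin 2, Fin 2) → ℝ) :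
    ∑ b, f b = f ![0,0] + f ![0,1] + f ![1,0] + f ![1,1] := by
  rw [show (univ : Finset (∀ _ : Fin 2, Fin 2)) = {![0,0], ![0,1], ![1,0], ![1,1]} from by decide]
  rw [Finset.sum_insert (by decide), Finset.sum_insert (by decide),
    Finset.sum_insert (by decide), Finset.sum_singleton]
  ring

lemma sup'_fin_two (f : Fin 2 → ℝ) :
    Finset.univ.sup' Finset.univ_nonempty f = max (f 0) (f 1) := by
  apply le_antisymm
  · apply Finset.sup'_le
    intro i _
    fin_cases i
    · exact le_max_left _ _
    · exact le_max_right _ _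
  · apply max_le <;> exact Finset.le_sup' f (mem_univ _)

lemma gw_iff (p q t s : ℝ) (σ : ∀ _ : Fin 2, Fin 2 → ℝ) (π : Fin 2 → Fin 2 → ℝ)
    (hσ : σ = ![![p, 1-p], ![q, 1-q]]) (hπ : π = ![![t, 1-t], ![s, 1-s]]) :
    ExtendedEquilibrium GWU σ π ↔
      (q*p + (1 - t*q)*(1-p) ≥ q ∧
       q*p + (1 - t*q)*(1-p) ≥ 1 - t*q ∧
       s*(1-p)*q + p*(1-q) ≥ s*(1-p) ∧
       s*(1-p)*q + p*(1-q) ≥ p ∧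
       ((max q (1-q) - q)*p + (max q (1-q) - (1-q))*(1-p))*t
          + ((max q 1 - q)*p + (max q 1 - 1)*(1-p))*(1-t)
         ≥ (max q (1-q) - q)*p + (max q (1-q) - (1-q))*(1-p) ∧
       ((max q (1-q) - q)*p + (max q (1-q) - (1-q))*(1-p))*t
          + ((max q 1 - q)*p + (max q 1 - 1)*(1-p))*(1-t)
         ≥ (max q 1 - q)*p + (max q 1 - 1)*(1-p) ∧
       ((max (1-p) p - (1-p))*q + (max (1-p) p - p)*(1-q))*s
          + ((max 0 p)*q + (max 0 p - p)*(1-q))*(1-s)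
         ≥ (max (1-p) p - (1-p))*q + (max (1-p) p - p)*(1-q) ∧
       ((max (1-p) p - (1-p))*q + (max (1-p) p - p)*(1-q))*s
          + ((max 0 p)*q + (max 0 p - p)*(1-q))*(1-s)
         ≥ (max 0 p)*q + (max 0 p - p)*(1-q)) := by
  have h00 : σ 0 0 = p := by rw [hσ]; norm_num
  have h01 : σ 0 1 = 1 - p := by rw [hσ]; norm_num
  have h10 : σ 1 0 = q := by rw [hσ]; norm_num
  have h11 : σ 1 1 = 1 - q := by rw [hσ]; norm_num
  have g00 : π 0 0 = t := by rw [hπ]; norm_num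
  have g01 : π 0 1 = 1 - t := by rw [hπ]; norm_num
  have g10 : π 1 0 = s := by rw [hπ]; norm_num
  have g11 : π 1 1 = 1 - s := by rw [hπ]; norm_num
  have m000 : EUmat GWU σ 0 0 0 = q := by
    simp [EUmat, sum_pi_fin_two, piProb, GWU, Function.update, Fin.prod_univ_two,
      h00, h01, h10, h11]; ring
  have m010 : EUmat GWU σ 0 1 0 = 1 - q := by
    simp [EUmat, sum_pi_fin_two, piProb, GWU, Function.update, Fin.prod_univ_two,
      h00, h01, h10, h11]; ring
  have m001 : EUmat GWU σ 0 0 1 = q := by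
    simp [EUmat, sum_pi_fin_two, piProb, GWU, Function.update, Fin.prod_univ_two,
      h00, h01, h10, h11]; ring
  have m011 : EUmat GWU σ 0 1 1 = 1 := by
    simp [EUmat, sum_pi_fin_two, piProb, GWU, Function.update, Fin.prod_univ_two,
      h00, h01, h10, h11]; ring
  have m100 : EUmat GWU σ 1 0 0 = 1 - p := by
    simp [EUmat, sum_pi_fin_two, piProb, GWU, Function.update, Fin.prod_univ_two,
      h00, h01, h10, h11]; ring
  have m110 : EUmat GWU σ 1 1 0 = p := by
    simp [EUmat, sum_pi_fin_two, piProb, GWU, Function.update, Fin.prod_univ_two,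
      h00, h01, h10, h11]; ring
  have m101 : EUmat GWU σ 1 0 1 = 0 := by
    simp [EUmat, sum_pi_fin_two, piProb, GWU, Function.update, Fin.prod_univ_two,
      h00, h01, h10, h11]
  have m111 : EUmat GWU σ 1 1 1 = p := by
    simp [EUmat, sum_pi_fin_two, piProb, GWU, Function.update, Fin.prod_univ_two,
      h00, h01, h10, h11]; ring
  have a00 : EUact GWU σ π 0 0 = q := by
    simp only [EUact, Fin.sum_univ_two, m000, m001, g00, g01]; ring
  have a01 : EUact GWU σ π 0 1 = 1 - t*q := by
    simp only [EUact, Fin.sum_univ_two, m010, m011, g00, g01]; ring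
  have a10 : EUact GWU σ π 1 0 = s*(1-p) := by
    simp only [EUact, Fin.sum_univ_two, m100, m101, g10, g11]; ring
  have a11 : EUact GWU σ π 1 1 = p := by
    simp only [EUact, Fin.sum_univ_two, m110, m111, g10, g11]; ring
  have T0 : EUtot GWU σ π 0 = q*p + (1 - t*q)*(1-p) := by
    simp only [EUtot, Fin.sum_univ_two, a00, a01, h00, h01]
  have T1 : EUtot GWU σ π 1 = s*(1-p)*q + p*(1-q) := by
    simp only [EUtot, Fin.sum_univ_two, a10, a11, h10, h11]
  have r000 : ERmat GWU σ 0 0 0 = max q (1-q) - q := by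
    simp only [ERmat, sup'_fin_two, m000, m010]
  have r010 : ERmat GWU σ 0 1 0 = max q (1-q) - (1-q) := by
    simp only [ERmat, sup'_fin_two, m000, m010]
  have r001 : ERmat GWU σ 0 0 1 = max q 1 - q := by
    simp only [ERmat, sup'_fin_two, m001, m011]
  have r011 : ERmat GWU σ 0 1 1 = max q 1 - 1 := by
    simp only [ERmat, sup'_fin_two, m001, m011]
  have r100 : ERmat GWU σ 1 0 0 = max (1-p) p - (1-p) := by
    simp only [ERmat, sup'_fin_two, m100, m110]
  have r110 : ERmat GWU σ 1 1 0 = max (1-p) p - p := by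
    simp only [ERmat, sup'_fin_two, m100, m110]
  have r101 : ERmat GWU σ 1 0 1 = max 0 p := by
    simp only [ERmat, sup'_fin_two, m101, m111]; ring
  have r111 : ERmat GWU σ 1 1 1 = max 0 p - p := by
    simp only [ERmat, sup'_fin_two, m101, m111]
  have R00 : ERparam GWU σ 0 0 = (max q (1-q) - q)*p + (max q (1-q) - (1-q))*(1-p) := by
    simp only [ERparam, Fin.sum_univ_two, r000, r010, h00, h01]
  have R01 : ERparam GWU σ 0 1 = (max q 1 - q)*p + (max q 1 - 1)*(1-p) := by
    simp only [ERparam, Fin.sum_univ_two, r001, r011, h00, h01]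
  have R10 : ERparam GWU σ 1 0 = (max (1-p) p - (1-p))*q + (max (1-p) p - p)*(1-q) := by
    simp only [ERparam, Fin.sum_univ_two, r100, r110, h10, h11]
  have R11 : ERparam GWU σ 1 1 = (max 0 p)*q + (max 0 p - p)*(1-q) := by
    simp only [ERparam, Fin.sum_univ_two, r101, r111, h10, h11]
  have RT0 : ERtot GWU σ π 0 = ((max q (1-q) - q)*p + (max q (1-q) - (1-q))*(1-p))*t
      + ((max q 1 - q)*p + (max q 1 - 1)*(1-p))*(1-t) := by
    simp only [ERtot, Fin.sum_univ_two, R00, R01, g00, g01]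
  have RT1 : ERtot GWU σ π 1 = ((max (1-p) p - (1-p))*q + (max (1-p) p - p)*(1-q))*s
      + ((max 0 p)*q + (max 0 p - p)*(1-q))*(1-s) := by
    simp only [ERtot, Fin.sum_univ_two, R10, R11, g10, g11]
  constructor
  · rintro ⟨hU, hR⟩
    refine ⟨?_, ?_, ?_, ?_, ?_, ?_, ?_, ?_⟩
    · have := hU 0 0; rwa [T0, a00] at this
    · have := hU 0 1; rwa [T0, a01] at this
    · have := hU 1 0; rwa [T1, a10] at this
    · have := hU 1 1; rwa [T1, a11] at this
    · have := hR 0 0; rwa [RT0, R00] at this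
    · have := hR 0 1; rwa [RT0, R01] at this
    · have := hR 1 0; rwa [RT1, R10] at this
    · have := hR 1 1; rwa [RT1, R11] at this
  · rintro ⟨c1, c2, c3, c4, c5, c6, c7, c8⟩
    constructor
    · simp only [Fin.forall_fin_two]
      exact ⟨⟨by rw [T0, a00]; exact c1, by rw [T0, a01]; exact c2⟩,
             ⟨by rw [T1, a10]; exact c3, by rw [T1, a11]; exact c4⟩⟩
    · simp only [Fin.forall_fin_two]
      exact ⟨⟨by rw [RT0, R00]; exact c5, by rw [RT0, R01]; exact c6⟩,
             ⟨by rw [RT1, R10]; exact c7, by rw [RT1, R11]; exact c8⟩⟩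

set_option maxHeartbeats 1000000 in
lemma gw_unique_real (p q t s : ℝ)
    (hp0 : 0 ≤ p) (hp1 : p ≤ 1) (hq0 : 0 ≤ q) (hq1 : q ≤ 1)
    (ht0 : 0 ≤ t) (ht1 : t ≤ 1) (hs0 : 0 ≤ s) (hs1 : s ≤ 1)
    (c1 : q*p + (1 - t*q)*(1-p) ≥ q)
    (c2 : q*p + (1 - t*q)*(1-p) ≥ 1 - t*q)
    (c3 : s*(1-p)*q + p*(1-q) ≥ s*(1-p))
    (c4 : s*(1-p)*q + p*(1-q) ≥ p)
    (c5 : ((max q (1-q) - q)*p + (max q (1-q) - (1-q))*(1-p))*t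
          + ((max q 1 - q)*p + (max q 1 - 1)*(1-p))*(1-t)
         ≥ (max q (1-q) - q)*p + (max q (1-q) - (1-q))*(1-p))
    (c6 : ((max q (1-q) - q)*p + (max q (1-q) - (1-q))*(1-p))*t
          + ((max q 1 - q)*p + (max q 1 - 1)*(1-p))*(1-t)
         ≥ (max q 1 - q)*p + (max q 1 - 1)*(1-p))
    (c7 : ((max (1-p) p - (1-p))*q + (max (1-p) p - p)*(1-q))*s
          + ((max 0 p)*q + (max 0 p - p)*(1-q))*(1-s)
         ≥ (max (1-p) p - (1-p))*q + (max (1-p) p - p)*(1-q))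
    (c8 : ((max (1-p) p - (1-p))*q + (max (1-p) p - p)*(1-q))*s
          + ((max 0 p)*q + (max 0 p - p)*(1-q))*(1-s)
         ≥ (max 0 p)*q + (max 0 p - p)*(1-q)) :
    p = 1 - 1/Real.sqrt 2 ∧ q = 2 - Real.sqrt 2 ∧ t = 1/Real.sqrt 2 ∧ s = Real.sqrt 2 - 1 := by
  rw [max_eq_right hq1] at c5 c6
  rw [max_eq_right hp0] at c7 c8
  obtain ⟨M, hM⟩ : ∃ M, max q (1-q) = M := ⟨_, rfl⟩
  rw [hM] at c5 c6
  have hM1 : q ≤ M := hM ▸ le_max_left _ _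
  have hM2 : 1 - q ≤ M := hM ▸ le_max_right _ _
  have hM3 : M = q ∨ M = 1 - q := hM ▸ max_choice _ _
  obtain ⟨K, hK⟩ : ∃ K, max (1-p) p = K := ⟨_, rfl⟩
  rw [hK] at c7 c8
  have hK1 : 1 - p ≤ K := hK ▸ le_max_left _ _
  have hK2 : p ≤ K := by rw [← hK]; exact le_max_right _ _
  have hK3 : K = 1 - p ∨ K = p := hK ▸ max_choice _ _
  -- product-form consequences
  have d1 : (1-p)*((1 - t*q) - q) ≥ 0 := by linarith only [c1]
  have d2 : p*(q - (1 - t*q)) ≥ 0 := by linarith only [c2]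
  have d3 : (1-q)*(p - s*(1-p)) ≥ 0 := by linarith only [c3]
  have d4 : q*(s*(1-p) - p) ≥ 0 := by linarith only [c4]
  have d5 : (1-t)*((1-q)*p - ((M - q)*p + (M - (1-q))*(1-p))) ≥ 0 := by linarith only [c5]
  have d6 : t*(((M - q)*p + (M - (1-q))*(1-p)) - (1-q)*p) ≥ 0 := by linarith only [c6]
  have d7 : (1-s)*(p*q - ((K - (1-p))*q + (K - p)*(1-q))) ≥ 0 := by linarith only [c7]
  have d8 : s*(((K - (1-p))*q + (K - p)*(1-q)) - p*q) ≥ 0 := by linarith only [c8]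
  clear c1 c2 c3 c4 c5 c6 c7 c8 hM hK
  have hr2 : Real.sqrt 2 ^ 2 = 2 := Real.sq_sqrt (by norm_num)
  set r := Real.sqrt 2 with hrdef
  have hr0 : 0 < r := Real.sqrt_pos.mpr (by norm_num)
  have hrlb : 1.41 < r := by nlinarith only [hr2, hr0]
  have hrub : r < 1.42 := by nlinarith only [hr2, hr0]
  -- p < 1
  have hplt : p < 1 := by
    rcases lt_or_eq_of_le hp1 with h | h
    · exact h
    · exfalso
      subst h
      nlinarith only [d2, d4, ht0, ht1, hq0]
  -- 0 < p
  have hpgt : 0 < p := by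
    rcases lt_or_eq_of_le hp0 with h | h
    · exact h
    · exfalso
      have hp' : p = 0 := h.symm
      subst hp'
      have hKv : K = 1 := by rcases hK3 with h' | h' <;> linarith only [h', hK1]
      subst hKv
      have hq1' : q = 1 := by
        have hh : 1 ≤ q := by linarith only [d3, d7]
        linarith only [hh, hq1]
      subst hq1'
      have ht' : t = 0 := le_antisymm (by linarith only [d1]) ht0
      subst ht'
      have hMv : M = 1 := by rcases hM3 with h' | h' <;> linarith only [h', hM1]
      subst hMv
      linarith only [d5]
  -- q = 1/(1+t)
  have h1 : 1 - t*q ≥ q := by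
    by_contra h; push_neg at h
    linarith only [d1, mul_pos (sub_pos.2 hplt) (sub_pos.2 h)]
  have h2 : q ≥ 1 - t*q := by
    by_contra h; push_neg at h
    linarith only [d2, mul_pos hpgt (sub_pos.2 h)]
  have he : 1 - t*q = q := le_antisymm h2 h1
  have hqt : q * (1+t) = 1 := by linear_combination -he
  have hq_half : 1/2 ≤ q := by
    linarith only [hqt, mul_nonneg hq0 (by linarith only [ht1] : (0:ℝ) ≤ 1 - t)]
  have hq_pos : 0 < q := by linarith only [hq_half]
  have hMv : M = q := le_antisymm
    (by rcases hM3 with h' | h' <;> linarith only [h', hq_half]) hM1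
  rw [hMv] at d5 d6
  have hs_ge : s*(1-p) ≥ p := by
    by_contra h; push_neg at h
    linarith only [d4, mul_pos hq_pos (sub_pos.2 h)]
  have ht_pos : 0 < t := by
    rcases lt_or_eq_of_le ht0 with h | h
    · exact h
    · exfalso
      have ht' : t = 0 := h.symm
      subst ht'
      have hq1' : q = 1 := by linarith only [hqt]
      subst hq1'
      linarith only [d5, hplt]
  have hq_lt1 : q < 1 := by linarith only [hqt, mul_pos hq_pos ht_pos]
  have hs_le : s*(1-p) ≤ p := by
    by_contra h; push_neg at h
    linarith only [d3, mul_pos (sub_pos.2 hq_lt1) (sub_pos.2 h)]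
  have hs_eq : s*(1-p) = p := le_antisymm hs_le hs_ge
  have hp_half : p ≤ 1/2 := by
    linarith only [hs_eq,
      mul_le_of_le_one_left (by linarith only [hplt] : (0:ℝ) ≤ 1-p) hs1]
  have hKv : K = 1 - p := le_antisymm
    (by rcases hK3 with h' | h' <;> linarith only [h', hp_half]) hK1
  rw [hKv] at d7 d8
  have hs_pos : 0 < s := by
    rcases lt_or_ge 0 s with h | h
    · exact h
    · exfalso
      have hmp : s * (1-p) ≤ 0 :=
        mul_nonpos_iff.mpr (Or.inr ⟨h, by linarith only [hplt]⟩)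
      rw [hs_eq] at hmp
      linarith only [hmp, hpgt]
  have ht_lt1 : t < 1 := by
    rcases lt_or_eq_of_le ht1 with h | h
    · exact h
    · exfalso
      subst h
      have hq' : q = 1/2 := by linear_combination hqt/2
      subst hq'
      linarith only [d6, hpgt]
  have hE1a : (q - (1-q))*(1-p) ≥ (1-q)*p := by
    by_contra h; push_neg at h
    linarith only [d6, mul_pos ht_pos (sub_pos.2 h)]
  have hE1b : (q - (1-q))*(1-p) ≤ (1-q)*p := by
    by_contra h; push_neg at h
    linarith only [d5, mul_pos (sub_pos.2 ht_lt1) (sub_pos.2 h)]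
  have hE1 : (2*q-1)*(1-p) = (1-q)*p := by
    linear_combination le_antisymm hE1b hE1a
  have hs_lt1 : s < 1 := by
    rcases lt_or_eq_of_le hs1 with h | h
    · exact h
    · exfalso
      subst h
      have hp' : p = 1/2 := by linarith only [hs_eq]
      subst hp'
      linarith only [d8, hq_pos]
  have hE2a : ((1-p) - p)*(1-q) ≥ p*q := by
    by_contra h; push_neg at h
    linarith only [d8, mul_pos hs_pos (sub_pos.2 h)]
  have hE2b : ((1-p) - p)*(1-q) ≤ p*q := by
    by_contra h; push_neg at h
    linarith only [d7, mul_pos (sub_pos.2 hs_lt1) (sub_pos.2 h)]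
  have hE2 : (1 - 2*p)*(1-q) = p*q := by
    linear_combination le_antisymm hE2b hE2a
  have hpq : p*q = 2*q - 1 := by linear_combination -hE1
  have hq2p : q = 2*p := by linear_combination hE2 - hpq
  have hquad : 2*p^2 - 4*p + 1 = 0 := by
    linear_combination hpq - (p - 2) * hq2p
  have hfact : (p - (1 - r/2)) * (p - (1 + r/2)) = 0 := by
    linear_combination hquad / 2 - hr2 / 4
  have hp_eq : p = 1 - r/2 := by
    rcases mul_eq_zero.mp hfact with h | h
    · linarith only [h]
    · exfalso
      linarith only [h, hrlb, hp_half]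
  have hq_eq : q = 2 - r := by rw [hq2p, hp_eq]; ring
  have ht_eq : t = r/2 := by
    have ha : (2 - r)*(1 + t) = 1 := by rw [← hq_eq]; linear_combination hqt
    have hb : (2 - r) * (t - r/2) = 0 := by linear_combination ha + hr2/2
    rcases mul_eq_zero.mp hb with h | h
    · exfalso; linarith only [h, hrub]
    · linarith only [h]
  have hs_eq2 : s = r - 1 := by
    have ha : s * (r/2) = 1 - r/2 := by
      rw [hp_eq] at hs_eq; linear_combination hs_eq
    have hb : r * (s - (r-1)) = 0 := by linear_combination 2*ha - hr2
    rcases mul_eq_zero.mp hb with h | h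
    · exfalso; linarith only [h, hr0]
    · linarith only [h]
  have hinv : 1/r = r/2 := by
    rw [div_eq_div_iff hr0.ne' (by norm_num : (2:ℝ) ≠ 0)]
    linear_combination -hr2
  exact ⟨by rw [hp_eq, hinv], hq_eq, by rw [ht_eq, hinv], hs_eq2⟩

/-- the "Generals and the weather" game has exactly one extended
equilibrium, namely `(GWσ; GWπ)`. -/
theorem gw_extended_equilibrium_unique :
    ∀ (σ : ∀ _ : Fin 2, Fin 2 → ℝ) (π : Fin 2 → Fin 2 → ℝ),
      ((∀ i, IsDist (σ i)) ∧ (∀ i, IsDist (π i)) ∧ ExtendedEquilibrium GWU σ π) ↔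
        (σ = GWσ ∧ π = GWπ) := by
  intro σ π
  constructor
  · rintro ⟨hσd, hπd, heq⟩
    have sum0 := (hσd 0).2
    have sum1 := (hσd 1).2
    have psum0 := (hπd 0).2
    have psum1 := (hπd 1).2
    rw [Fin.sum_univ_two] at sum0 sum1 psum0 psum1
    have hσm : σ = ![![σ 0 0, 1 - σ 0 0], ![σ 1 0, 1 - σ 1 0]] := by
      funext i j
      fin_cases i <;> fin_cases j <;> simp <;> linarith
    have hπm : π = ![![π 0 0, 1 - π 0 0], ![π 1 0, 1 - π 1 0]] := by
      funext i j
      fin_cases i <;> fin_cases j <;> simp <;> linarith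
    rw [gw_iff (σ 0 0) (σ 1 0) (π 0 0) (π 1 0) σ π hσm hπm] at heq
    obtain ⟨c1, c2, c3, c4, c5, c6, c7, c8⟩ := heq
    obtain ⟨hp, hq, ht, hs⟩ := gw_unique_real (σ 0 0) (σ 1 0) (π 0 0) (π 1 0)
      ((hσd 0).1 0) (by linarith [(hσd 0).1 1] : σ 0 0 ≤ 1)
      ((hσd 1).1 0) (by linarith [(hσd 1).1 1] : σ 1 0 ≤ 1)
      ((hπd 0).1 0) (by linarith [(hπd 0).1 1] : π 0 0 ≤ 1)
      ((hπd 1).1 0) (by linarith [(hπd 1).1 1] : π 1 0 ≤ 1)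
      c1 c2 c3 c4 c5 c6 c7 c8
    constructor
    · rw [hσm, hp, hq]
      funext i j
      fin_cases i <;> fin_cases j <;> simp [GWσ] <;> ring
    · rw [hπm, ht, hs]
      funext i j
      fin_cases i <;> fin_cases j <;> simp [GWπ] <;> ring
  · rintro ⟨rfl, rfl⟩
    have hr2 : Real.sqrt 2 ^ 2 = 2 := Real.sq_sqrt (by norm_num)
    have hr0 : 0 < Real.sqrt 2 := Real.sqrt_pos.mpr (by norm_num)
    have hrlb : 1.41 < Real.sqrt 2 := by nlinarith only [hr2, hr0]
    have hrub : Real.sqrt 2 < 1.42 := by nlinarith only [hr2, hr0]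
    have hi : (Real.sqrt 2)⁻¹ = Real.sqrt 2/2 := by
      rw [inv_eq_one_div, div_eq_div_iff hr0.ne' (by norm_num : (2:ℝ) ≠ 0)]
      linear_combination -hr2
    refine ⟨?_, ?_, ?_⟩
    · intro i
      fin_cases i <;> refine ⟨?_, ?_⟩
      · intro x; fin_cases x <;> simp [GWσ, hi] <;> linarith
      · rw [Fin.sum_univ_two]; norm_num [GWσ]
      · intro x; fin_cases x <;> simp [GWσ, hi] <;> linarith
      · rw [Fin.sum_univ_two]; norm_num [GWσ]
    · intro i
      fin_cases i <;> refine ⟨?_, ?_⟩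
      · intro x; fin_cases x <;> simp [GWπ, hi] <;> linarith
      · rw [Fin.sum_univ_two]; norm_num [GWπ]
      · intro x; fin_cases x <;> simp [GWπ, hi] <;> linarith
      · rw [Fin.sum_univ_two]; norm_num [GWπ]
    · have hσm : GWσ = ![![1 - Real.sqrt 2/2, 1 - (1 - Real.sqrt 2/2)],
          ![2 - Real.sqrt 2, 1 - (2 - Real.sqrt 2)]] := by
        funext i j
        fin_cases i <;> fin_cases j <;> simp [GWσ] <;> linarith [hi]
      have hπm : GWπ = ![![Real.sqrt 2/2, 1 - Real.sqrt 2/2],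
          ![Real.sqrt 2 - 1, 1 - (Real.sqrt 2 - 1)]] := by
        funext i j
        fin_cases i <;> fin_cases j <;> simp [GWπ] <;> linarith [hi]
      rw [gw_iff (1 - Real.sqrt 2/2) (2 - Real.sqrt 2) (Real.sqrt 2/2) (Real.sqrt 2 - 1)
        GWσ GWπ hσm hπm]
      rw [show max (2 - Real.sqrt 2) (1 - (2 - Real.sqrt 2)) = 2 - Real.sqrt 2 from
            max_eq_left (by linarith),
          show max (2 - Real.sqrt 2) (1:ℝ) = 1 from max_eq_right (by linarith),
          show max (1 - (1 - Real.sqrt 2/2)) (1 - Real.sqrt 2/2) = 1 - (1 - Real.sqrt 2/2) from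
            max_eq_left (by linarith),
          show max (0:ℝ) (1 - Real.sqrt 2/2) = 1 - Real.sqrt 2/2 from
            max_eq_right (by linarith)]
      refine ⟨?_, ?_, ?_, ?_, ?_, ?_, ?_, ?_⟩
      · exact ge_of_eq (by linear_combination (Real.sqrt 2/4) * hr2)
      · exact ge_of_eq (by linear_combination (Real.sqrt 2/4 - 1/2) * hr2)
      · exact ge_of_eq (by linear_combination (1/2 - Real.sqrt 2/2) * hr2)
      · exact ge_of_eq (by linear_combination (1 - Real.sqrt 2/2) * hr2)
      · exact ge_of_eq (by linear_combination (1/2 - Real.sqrt 2/4) * hr2)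
      · exact ge_of_eq (by linear_combination (-(Real.sqrt 2)/4) * hr2)
      · exact ge_of_eq (by linear_combination (Real.sqrt 2/2 - 1) * hr2)
      · exact ge_of_eq (by linear_combination (Real.sqrt 2/2 - 1/2) * hr2)
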